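/- Let K be a field, n ≥ 1, m ≥ 1, Z either ℤ^m or {t ∈ ℤ^m : t ≥ t₁}, and A_α : Z → M_n(K) with A_α(t+1_β)A_β(t) = A_β(t+1_α)A_α(t) for all t ∈ Z and all α, β. Then for all t, s ∈ Z with t ≥ s, the fundamental matrix factors as χ(t,s) = C_{1, t¹−s¹}(s¹,t²,…,t^m) · C_{2, t²−s²}(s¹,s²,t³,…,t^m) · … · C_{m−1, t^{m−1}−s^{m−1}}(s¹,…,s^{m−1},t^m) · C_{m, t^m−s^m}(s¹,s²,…,s^m). -/

import Mathlib

/-- The matrix `C_{α,k}(t)`: the ordered product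
`A α (t+(k-1)·1_α) · A α (t+(k-2)·1_α) · … · A α (t+1_α) · A α t`,
with `C_{α,0}(t) = 1`. -/
def Cmat {m n : ℕ} {K : Type*} [Field K]
    (A : Fin m → (Fin m → ℤ) → Matrix (Fin n) (Fin n) K) (α : Fin m) :
    ℕ → (Fin m → ℤ) → Matrix (Fin n) (Fin n) K
  | 0, _ => 1
  | k + 1, t => A α (t + (k : ℤ) • Pi.single α 1) * Cmat A α k t

/-- (Proposition 7 f) of the paper).
Assume `A α (t+1_β) * A β t = A β (t+1_α) * A α t` on `Z`, and let `χ` be the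
fundamental matrix. Then for all `t, s ∈ Z` with `s ≤ t`,
`χ t s = C_{1,t¹-s¹}(s¹,t²,…,t^m) · C_{2,t²-s²}(s¹,s²,t³,…,t^m) · … ·
C_{m,t^m-s^m}(s¹,…,s^m)`, the product taken in increasing order of `α`, where
the argument of `C_{α,·}` equals `s` in coordinates `≤ α` and `t` in
coordinates `> α`. Here `Z` is either `ℤ^m` or an upper set. -/
theorem fundamental_matrix_factorization
    {m n : ℕ} (hm : 1 ≤ m) (hn : 1 ≤ n) {K : Type*} [Field K]
    (Z : Set (Fin m → ℤ))
    (hZ : Z = Set.univ ∨ ∃ t₁ : Fin m → ℤ, Z = {t | t₁ ≤ t})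
    (A : Fin m → (Fin m → ℤ) → Matrix (Fin n) (Fin n) K)
    (hcompat : ∀ t ∈ Z, ∀ α β : Fin m,
      A α (t + Pi.single β 1) * A β t = A β (t + Pi.single α 1) * A α t)
    (χ : (Fin m → ℤ) → (Fin m → ℤ) → Matrix (Fin n) (Fin n) K)
    (hχrec : ∀ s ∈ Z, ∀ t ∈ Z, s ≤ t → ∀ α : Fin m,
      χ (t + Pi.single α 1) s = A α t * χ t s)
    (hχinit : ∀ s ∈ Z, χ s s = 1) :
    ∀ s ∈ Z, ∀ t ∈ Z, s ≤ t →
      χ t s = (((List.finRange m).map (fun α : Fin m =>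
        Cmat A α (t α - s α).toNat (fun i => if i ≤ α then s i else t i))).prod) := by
  intro s hs t ht hst
  -- Every point ≥ s lies in Z
  have hup : ∀ v : Fin m → ℤ, s ≤ v → v ∈ Z := by
    intro v hv
    rcases hZ with h | ⟨t₁, h⟩
    · simp [h]
    · rw [h] at hs ⊢
      exact le_trans hs hv
  -- Key lemma: iterating along one coordinate
  have key : ∀ (α : Fin m) (u : Fin m → ℤ), s ≤ u → ∀ k : ℕ,
      χ (u + (k : ℤ) • Pi.single α 1) s = Cmat A α k u * χ u s := by
    intro α u hu k
    induction k with
    | zero => simp [Cmat]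
    | succ k ih =>
      have hle : u ≤ u + (k : ℤ) • Pi.single α 1 := by
        intro i
        have : (0 : ℤ) ≤ ((k : ℤ) • Pi.single α 1 : Fin m → ℤ) i := by
          rcases eq_or_ne i α with rfl | hne
          · simp
          · simp [Pi.single_apply, hne]
        simpa using this
      have hsu : s ≤ u + (k : ℤ) • Pi.single α 1 := le_trans hu hle
      have hstep := hχrec s hs (u + (k : ℤ) • Pi.single α 1)
        (hup _ hsu) hsu α
      have harg : u + ((k : ℤ) + 1) • Pi.single α 1
          = (u + (k : ℤ) • Pi.single α 1) + Pi.single α 1 := by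
        funext i
        simp [add_smul]
        ring
      have : χ (u + ((k : ℕ) + 1 : ℤ) • Pi.single α 1) s
          = A α (u + (k : ℤ) • Pi.single α 1) * (Cmat A α k u * χ u s) := by
        rw [show ((k : ℕ) + 1 : ℤ) = (k : ℤ) + 1 by push_cast; ring, harg, hstep, ih]
      rw [show ((k + 1 : ℕ) : ℤ) = ((k : ℕ) + 1 : ℤ) by push_cast; ring, this]
      simp only [Cmat, Matrix.mul_assoc]
  -- intermediate points
  set f : Fin m → Matrix (Fin n) (Fin n) K := fun α =>
    Cmat A α (t α - s α).toNat (fun i => if i ≤ α then s i else t i) with hf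
  have aux : ∀ d : ℕ, ∀ j : ℕ, j + d = m →
      χ (fun i => if (i : ℕ) < j then s i else t i) s
        = (((List.finRange m).map f).drop j).prod := by
    intro d
    induction d with
    | zero =>
      intro j hj
      have h1 : (fun i : Fin m => if (i : ℕ) < j then s i else t i) = s := by
        funext i
        have h := i.isLt
        simp [show (i : ℕ) < j by omega]
      rw [h1, List.drop_eq_nil_of_le (by simp; omega), List.prod_nil, hχinit s hs]
    | succ d ih =>
      intro j hj
      have hjm : j < m := by omega
      have ihj := ih (j + 1) (by omega)
      set αj : Fin m := ⟨j, hjm⟩ with hαj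
      set q : Fin m → ℤ := fun i => if (i : ℕ) < j + 1 then s i else t i with hq
      have hsq : s ≤ q := by
        intro i
        simp only [hq]; split_ifs <;> simp [hst i]
      have hk : ((t αj - s αj).toNat : ℤ) = t αj - s αj :=
        Int.toNat_of_nonneg (sub_nonneg.mpr (hst αj))
      have harg : (fun i : Fin m => if (i : ℕ) < j then s i else t i)
          = q + ((t αj - s αj).toNat : ℤ) • Pi.single αj 1 := by
        funext i
        rcases eq_or_ne i αj with rfl | hne
        · simp [hq, hk, hαj]; have : s ⟨j, hjm⟩ ≤ t ⟨j, hjm⟩ := hst _; omega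
        · have hiv : (i : ℕ) ≠ j := fun h => hne (Fin.ext h)
          have hsingle : (Pi.single αj 1 : Fin m → ℤ) i = 0 := Pi.single_eq_of_ne hne 1
          by_cases h : (i : ℕ) < j
          · simp [hq, hsingle, h, Nat.lt_succ_of_lt h]; intro h2; omega
          · have h' : ¬ (i : ℕ) < j + 1 := by omega
            simp [hq, hsingle, h, h']; intro h2; omega
      have hqarg : (fun i : Fin m => if i ≤ αj then s i else t i) = q := by
        funext i
        have : i ≤ αj ↔ (i : ℕ) < j + 1 := by
          constructor <;> intro h
          · exact Nat.lt_succ_of_le h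
          · exact Nat.lt_succ_iff.mp h
        simp [hq, this]
      have hdrop : ((List.finRange m).map f).drop j
          = f αj :: ((List.finRange m).map f).drop (j + 1) := by
        rw [List.drop_eq_getElem_cons (by simpa using hjm)]
        congr 1
        simp [hαj]
      rw [harg, key αj q hsq, ihj, hdrop, List.prod_cons]
      congr 1
      rw [hf]
      simp only [hqarg]
  have := aux m 0 (by omega)
  have h0 : (fun i : Fin m => if (i : ℕ) < 0 then s i else t i) = t := by
    funext i; simp
  rw [h0] at this
  simpa using this
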